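/- For each h ∈ ℕ with h ≥ 1, the graph G_h is planar and has maximum degree at most 5. -/

import Mathlib

/-- A topological embedding of a graph in the plane: an injective assignment of points
to vertices and of arcs (injective paths) to edges, such that an arc meets a vertex
point only at its own endpoints and two arcs of distinct edges meet only in common
endpoints. -/
structure PlaneEmbedding {α : Type*} (G : SimpleGraph α) where
  vtx : α → ℝ × ℝ
  inj : Function.Injective vtx
  arc : ∀ ⦃u v : α⦄, G.Adj u v → _root_.Path (vtx u) (vtx v)
  arc_inj : ∀ ⦃u v : α⦄ (h : G.Adj u v), Function.Injective (arc h)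
  arc_symm : ∀ ⦃u v : α⦄ (h : G.Adj u v), arc h.symm = (arc h).symm
  arc_avoid : ∀ ⦃u v : α⦄ (h : G.Adj u v) (w : α),
    vtx w ∈ Set.range (arc h) → w = u ∨ w = v
  arc_disjoint : ∀ ⦃u v a b : α⦄ (h₁ : G.Adj u v) (h₂ : G.Adj a b), s(u, v) ≠ s(a, b) →
    Set.range (arc h₁) ∩ Set.range (arc h₂) ⊆ {vtx u, vtx v} ∩ {vtx a, vtx b}

/-- A graph is planar if it admits a plane embedding in the plane `ℝ × ℝ`. -/
def IsPlanar {α : Type*} (G : SimpleGraph α) : Prop :=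
  Nonempty (PlaneEmbedding G)

/-- Vertices of the complete binary tree of height `h`: a vertex of depth `i`
is a pair `⟨i, j⟩` where `j < 2 ^ i` is its left-to-right index at depth `i`. -/
abbrev BT (h : ℕ) := Σ i : Fin (h + 1), Fin (2 ^ (i : ℕ))

/-- The root of the complete binary tree. -/
def btRoot (h : ℕ) : BT h := ⟨0, ⟨0, by positivity⟩⟩

/-- `p` is the parent of `v` in the complete binary tree: the children of
`⟨i, j⟩` are `⟨i + 1, 2 * j⟩` (left) and `⟨i + 1, 2 * j + 1⟩` (right). -/
def IsParent {h : ℕ} (p v : BT h) : Prop :=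
  (v.1 : ℕ) = (p.1 : ℕ) + 1 ∧ (v.2 : ℕ) / 2 = (p.2 : ℕ)

/-- The complete binary tree `T_h` of height `h` as a simple graph. -/
def btTree (h : ℕ) : SimpleGraph (BT h) :=
  SimpleGraph.fromRel (fun p v => IsParent p v)

/-- `a` is an ancestor of `v` (this includes `a = v`). -/
def IsAncestor {h : ℕ} (a v : BT h) : Prop :=
  (a.1 : ℕ) ≤ (v.1 : ℕ) ∧ (a.2 : ℕ) = (v.2 : ℕ) / 2 ^ ((v.1 : ℕ) - (a.1 : ℕ))

/-- A set of vertices of `T_h` is unrelated if no element of it is an ancestor of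
another element of it. -/
def Unrelated {h : ℕ} (B : Set (BT h)) : Prop :=
  ∀ a ∈ B, ∀ v ∈ B, a ≠ v → ¬IsAncestor a v

/-- `v` is a leaf of `T_h`, i.e. has depth `h`. -/
def IsLeaf {h : ℕ} (v : BT h) : Prop := (v.1 : ℕ) = h

/-- The graph `G_h`: the complete binary tree `T_h` together with, for each depth
`i ∈ {1, …, h}`, the edges of a path `D_i` through all the vertices of depth `i`
in left-to-right order. -/
def gGraph (h : ℕ) : SimpleGraph (BT h) :=
  SimpleGraph.fromRel (fun a b =>
    IsParent a b ∨ ((a.1 : ℕ) = (b.1 : ℕ) ∧ (a.2 : ℕ) + 1 = (b.2 : ℕ)))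

def XC {h : ℕ} (v : BT h) : ℕ := (2 * (v.2 : ℕ) + 1) * 2 ^ (h - (v.1 : ℕ))

noncomputable def emb (h : ℕ) (v : BT h) : ℝ × ℝ := ((XC v : ℝ), ((v.1 : ℕ) : ℝ))

lemma bt_ext {h : ℕ} {u v : BT h} (h1 : (u.1 : ℕ) = (v.1 : ℕ)) (h2 : (u.2 : ℕ) = (v.2 : ℕ)) :
    u = v := by
  rcases u with ⟨⟨i, hi⟩, ⟨j, hj⟩⟩
  rcases v with ⟨⟨i', hi'⟩, ⟨j', hj'⟩⟩
  simp only [Fin.val_mk] at h1 h2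
  subst h1
  subst h2
  rfl

lemma emb_inj (h : ℕ) : Function.Injective (emb h) := by
  intro u v huv
  rw [emb, emb, Prod.ext_iff] at huv
  obtain ⟨hx, hy⟩ := huv
  have h1 : (u.1 : ℕ) = (v.1 : ℕ) := Nat.cast_inj.mp hy
  have hx2 : XC u = XC v := Nat.cast_inj.mp hx
  rw [XC, XC] at hx2
  have hE : (2:ℕ) ^ (h - (u.1:ℕ)) = 2 ^ (h - (v.1:ℕ)) := by rw [h1]
  rw [hE] at hx2
  have h2 : 2 * (u.2:ℕ) + 1 = 2 * (v.2:ℕ) + 1 :=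
    Nat.eq_of_mul_eq_mul_right (Nat.pow_pos (by norm_num)) hx2
  exact bt_ext h1 (by omega)

noncomputable def seg (a b : ℝ × ℝ) : Path a b where
  toFun t := ((1 - (t:ℝ)) * a.1 + t * b.1, (1 - (t:ℝ)) * a.2 + t * b.2)
  continuous_toFun := by fun_prop
  source' := by norm_num
  target' := by norm_num

lemma seg_apply (a b : ℝ × ℝ) (t : unitInterval) :
    seg a b t = ((1 - (t:ℝ)) * a.1 + t * b.1, (1 - (t:ℝ)) * a.2 + t * b.2) := rfl

lemma seg_comp_symm (a b : ℝ × ℝ) (t : unitInterval) :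
    seg a b (unitInterval.symm t) = seg b a t := by
  rw [seg_apply, seg_apply, Prod.ext_iff]
  rw [unitInterval.coe_symm_eq]
  constructor <;> ring

lemma seg_symm (a b : ℝ × ℝ) : (seg a b).symm = seg b a := by
  ext t : 2
  exact seg_comp_symm a b t

lemma range_seg_symm (a b : ℝ × ℝ) : Set.range ⇑(seg a b) = Set.range ⇑(seg b a) := by
  ext z
  constructor <;> rintro ⟨t, rfl⟩
  · exact ⟨unitInterval.symm t, seg_comp_symm b a t⟩
  · exact ⟨unitInterval.symm t, seg_comp_symm a b t⟩

lemma seg_inj {a b : ℝ × ℝ} (hab : a ≠ b) : Function.Injective ⇑(seg a b) := by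
  intro t s hts
  rw [seg_apply, seg_apply, Prod.ext_iff] at hts
  simp only at hts
  obtain ⟨h1, h2⟩ := hts
  refine Subtype.ext ?_
  by_contra hne
  apply hab
  have hts' : (t:ℝ) - s ≠ 0 := sub_ne_zero_of_ne (fun hh => hne hh)
  have hx : ((t:ℝ) - s) * (b.1 - a.1) = 0 := by nlinarith [h1]
  have hy : ((t:ℝ) - s) * (b.2 - a.2) = 0 := by nlinarith [h2]
  have e1 : b.1 = a.1 := by have := (mul_eq_zero.mp hx).resolve_left hts'; linarith
  have e2 : b.2 = a.2 := by have := (mul_eq_zero.mp hy).resolve_left hts'; linarith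
  exact Prod.ext e1.symm e2.symm

lemma mem_range_seg {a b : ℝ × ℝ} {z : ℝ × ℝ} :
    z ∈ Set.range ⇑(seg a b) ↔ ∃ t : ℝ, 0 ≤ t ∧ t ≤ 1 ∧
      z = ((1 - t) * a.1 + t * b.1, (1 - t) * a.2 + t * b.2) := by
  constructor
  · rintro ⟨⟨t, ht0, ht1⟩, rfl⟩
    exact ⟨t, ht0, ht1, rfl⟩
  · rintro ⟨t, ht0, ht1, rfl⟩
    exact ⟨⟨t, ht0, ht1⟩, rfl⟩

-- pin lemma
lemma pin01 {t : ℝ} {m n : ℕ} (h0 : 0 ≤ t) (h1 : t ≤ 1) (heq : (m:ℝ) = n + t) :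
    (t = 0 ∧ m = n) ∨ (t = 1 ∧ m = n + 1) := by
  rcases le_or_gt m n with hmn | hmn
  · left
    have hc : (m:ℝ) ≤ n := by exact_mod_cast hmn
    have ht : t = 0 := by linarith
    refine ⟨ht, ?_⟩
    have : (m:ℝ) = n := by linarith
    exact_mod_cast this
  · right
    have hc : (n:ℝ) + 1 ≤ m := by exact_mod_cast hmn
    have ht : t = 1 := by linarith
    refine ⟨ht, ?_⟩
    have : (m:ℝ) = n + 1 := by linarith
    exact_mod_cast this

def ERel {h : ℕ} (a b : BT h) : Prop :=
  IsParent a b ∨ ((a.1 : ℕ) = (b.1 : ℕ) ∧ (a.2 : ℕ) + 1 = (b.2 : ℕ))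

lemma cancelP {E : ℕ} {A B : ℝ} (hAB : A * 2 ^ E = B * 2 ^ E) : A = B :=
  mul_right_cancel₀ (by positivity) hAB

lemma avoid_core {h : ℕ} {u v w : BT h} (hr : ERel u v)
    (hw : emb h w ∈ Set.range ⇑(seg (emb h u) (emb h v))) : w = u ∨ w = v := by
  obtain ⟨⟨iu, hiu⟩, ⟨ju, hju⟩⟩ := u
  obtain ⟨⟨iv, hiv⟩, ⟨jv, hjv⟩⟩ := v
  obtain ⟨⟨iw, hiw⟩, ⟨jw, hjw⟩⟩ := w
  rw [mem_range_seg] at hw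
  obtain ⟨t, ht0, ht1, hz⟩ := hw
  rw [Prod.ext_iff] at hz
  obtain ⟨hx, hy⟩ := hz
  simp only [emb, XC, Fin.val_mk] at hx hy
  push_cast at hx hy
  rcases hr with ⟨hpi, hpj⟩ | ⟨hpi, hpj⟩
  · -- tree edge: iv = iu + 1, jv / 2 = ju
    simp only [Fin.val_mk] at hpi hpj
    subst hpi
    have hy2 : (iw : ℝ) = iu + t := by rw [hy]; push_cast; ring
    rcases pin01 ht0 ht1 hy2 with ⟨ht, hiw2⟩ | ⟨ht, hiw2⟩
    · left
      subst ht; subst hiw2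
      have hxr : (2 * (jw:ℝ) + 1) * 2 ^ (h - iw) = (2 * (ju:ℝ) + 1) * 2 ^ (h - iw) := by
        rw [hx]; ring
      have hxx : (2 * jw + 1) * 2 ^ (h - iw) = (2 * ju + 1) * 2 ^ (h - iw) := by
        exact_mod_cast hxr
      have h2 := Nat.eq_of_mul_eq_mul_right (Nat.pow_pos (by norm_num)) hxx
      refine bt_ext rfl ?_
      show jw = ju
      omega
    · right
      subst ht; subst hiw2
      have hxr : (2 * (jw:ℝ) + 1) * 2 ^ (h - (iu + 1)) =
          (2 * (jv:ℝ) + 1) * 2 ^ (h - (iu + 1)) := by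
        rw [hx]; ring
      have hxx : (2 * jw + 1) * 2 ^ (h - (iu + 1)) = (2 * jv + 1) * 2 ^ (h - (iu + 1)) := by
        exact_mod_cast hxr
      have h2 := Nat.eq_of_mul_eq_mul_right (Nat.pow_pos (by norm_num)) hxx
      refine bt_ext rfl ?_
      show jw = jv
      omega
  · -- horizontal edge: iv = iu, jv = ju + 1
    simp only [Fin.val_mk] at hpi hpj
    subst hpj
    subst hpi
    have hy2 : (iw : ℝ) = (iu : ℝ) := by rw [hy]; ring
    have hiw2 : iw = iu := by exact_mod_cast hy2
    subst hiw2
    have hx2 : (2 * (jw:ℝ) + 1) = (1 - t) * (2 * ju + 1) + t * (2 * (ju + 1) + 1) := by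
      apply cancelP (E := h - iw)
      rw [hx]; push_cast; ring
    have hy3 : (jw : ℝ) = ju + t := by push_cast at hx2; linarith
    rcases pin01 ht0 ht1 hy3 with ⟨ht, hjw2⟩ | ⟨ht, hjw2⟩
    · refine Or.inl (bt_ext rfl ?_)
      show jw = ju
      omega
    · refine Or.inr (bt_ext rfl ?_)
      show jw = ju + 1
      omega

def Horiz {h : ℕ} (a b : BT h) : Prop :=
  (a.1 : ℕ) = (b.1 : ℕ) ∧ (a.2 : ℕ) + 1 = (b.2 : ℕ)

lemma seg_t0 (p q : ℝ × ℝ) :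
    ((1 - (0:ℝ)) * p.1 + 0 * q.1, (1 - (0:ℝ)) * p.2 + 0 * q.2) = p := by
  norm_num
lemma seg_t1 (p q : ℝ × ℝ) :
    ((1 - (1:ℝ)) * p.1 + 1 * q.1, (1 - (1:ℝ)) * p.2 + 1 * q.2) = q := by
  norm_num

lemma keyHT {h : ℕ} {u v a b : BT h} (h1 : Horiz u v) (h2 : IsParent a b) {z : ℝ × ℝ}
    (hz1 : z ∈ Set.range ⇑(seg (emb h u) (emb h v)))
    (hz2 : z ∈ Set.range ⇑(seg (emb h a) (emb h b))) :
    z ∈ ({emb h u, emb h v} : Set (ℝ × ℝ)) ∩ {emb h a, emb h b} := by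
  obtain ⟨⟨iu, hiu⟩, ⟨ju, hju⟩⟩ := u
  obtain ⟨⟨iv, hiv⟩, ⟨jv, hjv⟩⟩ := v
  obtain ⟨⟨ia, hia⟩, ⟨ja, hja⟩⟩ := a
  obtain ⟨⟨ib, hib⟩, ⟨jb, hjb⟩⟩ := b
  obtain ⟨h1i, h1j⟩ := h1
  obtain ⟨h2i, h2j⟩ := h2
  simp only [Fin.val_mk] at h1i h1j h2i h2j
  subst h1i; subst h1j; subst h2i
  rw [mem_range_seg] at hz1 hz2
  obtain ⟨t, ht0, ht1, rfl⟩ := hz1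
  obtain ⟨s, hs0, hs1, heq⟩ := hz2
  have hx := congrArg Prod.fst heq
  have hy := congrArg Prod.snd heq
  simp only [emb, XC, Fin.val_mk] at hx hy
  push_cast at hx hy
  have hy2 : (iu : ℝ) = ia + s := by rw [show ((1:ℝ)-t)*iu + t*iu = (iu:ℝ) from by ring] at hy; rw [hy]; push_cast; ring
  rcases pin01 hs0 hs1 hy2 with ⟨hs, hii⟩ | ⟨hs, hii⟩
  · -- s = 0 : z = emb a, level of a equals iu
    subst hs; subst hii
    have hx2 : (1 - t) * (2*(ju:ℝ)+1) + t * (2*(ju:ℝ)+3) = 2*(ja:ℝ)+1 := by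
      apply cancelP (E := h - iu)
      push_cast at hx ⊢
      linear_combination hx
    have hy3 : (ja : ℝ) = ju + t := by linarith
    constructor
    · rcases pin01 ht0 ht1 hy3 with ⟨ht, _⟩ | ⟨ht, _⟩
      · subst ht; exact Set.mem_insert_iff.mpr (Or.inl (seg_t0 _ _))
      · subst ht; exact Set.mem_insert_iff.mpr (Or.inr (seg_t1 _ _))
    · exact Set.mem_insert_iff.mpr (Or.inl (heq.trans (seg_t0 _ _)))
  · -- s = 1 : z = emb b, level of b equals iu
    subst hs; subst hii
    have hx2 : (1 - t) * (2*(ju:ℝ)+1) + t * (2*(ju:ℝ)+3) = 2*(jb:ℝ)+1 := by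
      apply cancelP (E := h - (ia+1))
      push_cast at hx ⊢
      linear_combination hx
    have hy3 : (jb : ℝ) = ju + t := by linarith
    constructor
    · rcases pin01 ht0 ht1 hy3 with ⟨ht, _⟩ | ⟨ht, _⟩
      · subst ht; exact Set.mem_insert_iff.mpr (Or.inl (seg_t0 _ _))
      · subst ht; exact Set.mem_insert_iff.mpr (Or.inr (seg_t1 _ _))
    · exact Set.mem_insert_iff.mpr (Or.inr (heq.trans (seg_t1 _ _)))

lemma keyHH {h : ℕ} {u v a b : BT h} (h1 : Horiz u v) (h2 : Horiz a b)
    (hne : s(u, v) ≠ s(a, b)) {z : ℝ × ℝ}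
    (hz1 : z ∈ Set.range ⇑(seg (emb h u) (emb h v)))
    (hz2 : z ∈ Set.range ⇑(seg (emb h a) (emb h b))) :
    z ∈ ({emb h u, emb h v} : Set (ℝ × ℝ)) ∩ {emb h a, emb h b} := by
  obtain ⟨⟨iu, hiu⟩, ⟨ju, hju⟩⟩ := u
  obtain ⟨⟨iv, hiv⟩, ⟨jv, hjv⟩⟩ := v
  obtain ⟨⟨ia, hia⟩, ⟨ja, hja⟩⟩ := a
  obtain ⟨⟨ib, hib⟩, ⟨jb, hjb⟩⟩ := b
  obtain ⟨h1i, h1j⟩ := h1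
  obtain ⟨h2i, h2j⟩ := h2
  simp only [Fin.val_mk] at h1i h1j h2i h2j
  subst h1i; subst h1j; subst h2i; subst h2j
  rw [mem_range_seg] at hz1 hz2
  obtain ⟨t, ht0, ht1, rfl⟩ := hz1
  obtain ⟨s, hs0, hs1, heq⟩ := hz2
  have hx := congrArg Prod.fst heq
  have hy := congrArg Prod.snd heq
  simp only [emb, XC, Fin.val_mk] at hx hy
  push_cast at hx hy
  have hy2 : (iu : ℝ) = (ia : ℝ) := by
    rw [show ((1:ℝ)-t)*iu + t*iu = (iu:ℝ) from by ring] at hy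
    rw [hy]; ring
  have hii : iu = ia := by exact_mod_cast hy2
  subst hii
  have hx2 : (1 - t) * (2*(ju:ℝ)+1) + t * (2*(ju:ℝ)+3) =
      (1 - s) * (2*(ja:ℝ)+1) + s * (2*(ja:ℝ)+3) := by
    apply cancelP (E := h - iu)
    linear_combination hx
  have hts : (ju : ℝ) + t = ja + s := by linarith
  rcases lt_trichotomy ju ja with hlt | heqj | hgt
  · have hc : (ju:ℝ) + 1 ≤ ja := by exact_mod_cast hlt
    have ht : t = 1 := by linarith
    have hs : s = 0 := by linarith
    have hjj : (ja : ℝ) = ju + 1 := by linarith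
    have hjj2 : ja = ju + 1 := by exact_mod_cast hjj
    subst hjj2; subst ht; subst hs
    exact ⟨Set.mem_insert_iff.mpr (Or.inr (seg_t1 _ _)),
      Set.mem_insert_iff.mpr (Or.inl (heq.trans (seg_t0 _ _)))⟩
  · subst heqj
    exact absurd rfl hne
  · have hc : (ja:ℝ) + 1 ≤ ju := by exact_mod_cast hgt
    have ht : t = 0 := by linarith
    have hs : s = 1 := by linarith
    have hjj : (ju : ℝ) = ja + 1 := by linarith
    have hjj2 : ju = ja + 1 := by exact_mod_cast hjj
    subst hjj2; subst ht; subst hs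
    exact ⟨Set.mem_insert_iff.mpr (Or.inl (seg_t0 _ _)),
      Set.mem_insert_iff.mpr (Or.inr (heq.trans (seg_t1 _ _)))⟩

set_option maxHeartbeats 1600000 in
lemma keyTT {h : ℕ} {u v a b : BT h} (h1 : IsParent u v) (h2 : IsParent a b)
    (hne : s(u, v) ≠ s(a, b)) {z : ℝ × ℝ}
    (hz1 : z ∈ Set.range ⇑(seg (emb h u) (emb h v)))
    (hz2 : z ∈ Set.range ⇑(seg (emb h a) (emb h b))) :
    z ∈ ({emb h u, emb h v} : Set (ℝ × ℝ)) ∩ {emb h a, emb h b} := by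
  obtain ⟨⟨iu, hiu⟩, ⟨ju, hju⟩⟩ := u
  obtain ⟨⟨iv, hiv⟩, ⟨jv, hjv⟩⟩ := v
  obtain ⟨⟨ia, hia⟩, ⟨ja, hja⟩⟩ := a
  obtain ⟨⟨ib, hib⟩, ⟨jb, hjb⟩⟩ := b
  obtain ⟨h1i, h1j⟩ := h1
  obtain ⟨h2i, h2j⟩ := h2
  simp only [Fin.val_mk] at h1i h1j h2i h2j
  subst h1i; subst h2i
  rw [mem_range_seg] at hz1 hz2
  obtain ⟨t, ht0, ht1, rfl⟩ := hz1
  obtain ⟨s, hs0, hs1, heq⟩ := hz2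
  have hx := congrArg Prod.fst heq
  have hy := congrArg Prod.snd heq
  simp only [emb, XC, Fin.val_mk] at hx hy
  push_cast at hx hy
  have hy2 : (iu : ℝ) + t = (ia : ℝ) + s := by nlinarith [hy]
  have hiva : iu + 1 ≤ h := by omega
  have hivb : ia + 1 ≤ h := by omega
  have c1 : (ia:ℝ) ≤ iu + 1 := by linarith
  have c2 : (iu:ℝ) ≤ ia + 1 := by linarith
  have c1n : ia ≤ iu + 1 := by exact_mod_cast c1
  have c2n : iu ≤ ia + 1 := by exact_mod_cast c2
  rcases (by omega : ia = iu ∨ ia = iu + 1 ∨ iu = ia + 1) with hc | hc | hc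
  · -- same level
    subst hc
    have hts : t = s := by linarith
    subst hts
    have hx2 : (1 - t) * (2*(2*(ju:ℝ)+1)) + t * (2*(jv:ℝ)+1) =
        (1 - t) * (2*(2*(ja:ℝ)+1)) + t * (2*(jb:ℝ)+1) := by
      apply cancelP (E := h - (ia+1))
      rw [show h - ia = (h - (ia+1)) + 1 from by omega] at hx
      linear_combination hx
    have hjv2 : jv ≤ 2*ju + 1 ∧ 2*ju ≤ jv := by omega
    have hjb2 : jb ≤ 2*ja + 1 ∧ 2*ja ≤ jb := by omega
    rcases lt_trichotomy ju ja with hlt | heqj | hgt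
    · exfalso
      have f1 : (0:ℝ) ≤ 1 - t := by linarith
      have f2 : (ju:ℝ) + 1 ≤ ja := by exact_mod_cast hlt
      have f3 : (jv:ℝ) ≤ 2*ju+1 := by exact_mod_cast hjv2.1
      have f4 : 2*(ja:ℝ) ≤ jb := by exact_mod_cast hjb2.2
      nlinarith [hx2, mul_nonneg f1 (by linarith : (0:ℝ) ≤ (ja:ℝ) - ju - 1),
        mul_nonneg ht0 (by linarith : (0:ℝ) ≤ (jb:ℝ) - jv - 1)]
    · subst heqj
      have h3 : t * ((2*(jv:ℝ)+1) - (2*(jb:ℝ)+1)) = 0 := by linear_combination hx2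
      rcases mul_eq_zero.mp h3 with ht | hd
      · subst ht
        exact ⟨Set.mem_insert_iff.mpr (Or.inl (seg_t0 _ _)),
          Set.mem_insert_iff.mpr (Or.inl (heq.trans (seg_t0 _ _)))⟩
      · have : (jv:ℝ) = jb := by linarith
        have hjj : jv = jb := by exact_mod_cast this
        exact absurd (by rw [show (⟨⟨ia, hiu⟩, ⟨ju, hju⟩⟩ : BT h) = ⟨⟨ia, hia⟩, ⟨ju, hja⟩⟩ from bt_ext rfl rfl,
          show (⟨⟨ia + 1, hiv⟩, ⟨jv, hjv⟩⟩ : BT h) = ⟨⟨ia + 1, hib⟩, ⟨jb, hjb⟩⟩ from bt_ext rfl hjj]) hne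
    · exfalso
      have f1 : (0:ℝ) ≤ 1 - t := by linarith
      have f2 : (ja:ℝ) + 1 ≤ ju := by exact_mod_cast hgt
      have f3 : (jb:ℝ) ≤ 2*ja+1 := by exact_mod_cast hjb2.1
      have f4 : 2*(ju:ℝ) ≤ jv := by exact_mod_cast hjv2.2
      nlinarith [hx2, mul_nonneg f1 (by linarith : (0:ℝ) ≤ (ju:ℝ) - ja - 1),
        mul_nonneg ht0 (by linarith : (0:ℝ) ≤ (jv:ℝ) - jb - 1)]
  · -- a one level below u : t = 1, s = 0
    have hcr : (ia:ℝ) = iu + 1 := by exact_mod_cast hc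
    have ht : t = 1 := by linarith
    have hs : s = 0 := by linarith
    subst ht; subst hs
    exact ⟨Set.mem_insert_iff.mpr (Or.inr (seg_t1 _ _)),
      Set.mem_insert_iff.mpr (Or.inl (heq.trans (seg_t0 _ _)))⟩
  · -- u one level below a : t = 0, s = 1
    have hcr : (iu:ℝ) = ia + 1 := by exact_mod_cast hc
    have ht : t = 0 := by linarith
    have hs : s = 1 := by linarith
    subst ht; subst hs
    exact ⟨Set.mem_insert_iff.mpr (Or.inl (seg_t0 _ _)),
      Set.mem_insert_iff.mpr (Or.inr (heq.trans (seg_t1 _ _)))⟩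

lemma key_all {h : ℕ} {u v a b : BT h} (h1 : ERel u v) (h2 : ERel a b)
    (hne : s(u, v) ≠ s(a, b)) :
    Set.range ⇑(seg (emb h u) (emb h v)) ∩ Set.range ⇑(seg (emb h a) (emb h b)) ⊆
      ({emb h u, emb h v} : Set (ℝ × ℝ)) ∩ {emb h a, emb h b} := by
  rintro z ⟨hz1, hz2⟩
  rcases h1 with h1 | h1 <;> rcases h2 with h2 | h2
  · exact keyTT h1 h2 hne hz1 hz2
  · obtain ⟨p1, p2⟩ := keyHT h2 h1 hz2 hz1
    exact ⟨p2, p1⟩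
  · exact keyHT h1 h2 hz1 hz2
  · exact keyHH h1 h2 hne hz1 hz2

lemma adj_iff {h : ℕ} {u v : BT h} :
    (gGraph h).Adj u v ↔ u ≠ v ∧ (ERel u v ∨ ERel v u) := by
  rw [gGraph, SimpleGraph.fromRel_adj]
  rfl

noncomputable def gEmbedding (h : ℕ) : PlaneEmbedding (gGraph h) where
  vtx := emb h
  inj := emb_inj h
  arc := fun u v _ => seg (emb h u) (emb h v)
  arc_inj := fun u v hadj => seg_inj (fun he => hadj.ne (emb_inj h he))
  arc_symm := fun u v hadj => (seg_symm (emb h u) (emb h v)).symm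
  arc_avoid := by
    intro u v hadj w hw
    rcases (adj_iff.mp hadj).2 with hr | hr
    · exact avoid_core hr hw
    · rcases avoid_core hr (by rwa [range_seg_symm] at hw) with hh | hh
      · exact Or.inr hh
      · exact Or.inl hh
  arc_disjoint := by
    intro u v a b h₁ h₂ hne z hz
    rcases (adj_iff.mp h₁).2 with hr1 | hr1 <;> rcases (adj_iff.mp h₂).2 with hr2 | hr2
    · exact key_all hr1 hr2 hne hz
    · have hne2 : s(u, v) ≠ s(b, a) := fun e => hne (e.trans Sym2.eq_swap)
      have hz2 : z ∈ Set.range ⇑(seg (emb h u) (emb h v)) ∩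
          Set.range ⇑(seg (emb h b) (emb h a)) := by
        refine ⟨hz.1, ?_⟩
        rw [range_seg_symm]
        exact hz.2
      obtain ⟨p1, p2⟩ := key_all hr1 hr2 hne2 hz2
      rw [Set.pair_comm] at p2
      exact ⟨p1, p2⟩
    · have hne2 : s(v, u) ≠ s(a, b) := fun e => hne (Sym2.eq_swap.trans e)
      have hz2 : z ∈ Set.range ⇑(seg (emb h v) (emb h u)) ∩
          Set.range ⇑(seg (emb h a) (emb h b)) := by
        refine ⟨?_, hz.2⟩
        rw [range_seg_symm]
        exact hz.1
      obtain ⟨p1, p2⟩ := key_all hr1 hr2 hne2 hz2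
      rw [Set.pair_comm] at p1
      exact ⟨p1, p2⟩
    · have hne2 : s(v, u) ≠ s(b, a) := fun e => hne (Sym2.eq_swap.trans (e.trans Sym2.eq_swap))
      have hz2 : z ∈ Set.range ⇑(seg (emb h v) (emb h u)) ∩
          Set.range ⇑(seg (emb h b) (emb h a)) := by
        refine ⟨?_, ?_⟩ <;> rw [range_seg_symm]
        exacts [hz.1, hz.2]
      obtain ⟨p1, p2⟩ := key_all hr1 hr2 hne2 hz2
      rw [Set.pair_comm] at p1 p2
      exact ⟨p1, p2⟩

lemma div2_lt {i j : ℕ} (hj : j < 2 ^ i) : j / 2 < 2 ^ (i - 1) := by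
  rcases Nat.eq_zero_or_pos i with h0 | h0
  · subst h0
    simp only [pow_zero] at hj ⊢
    omega
  · apply Nat.div_lt_of_lt_mul
    have : 2 ^ (i - 1) * 2 = 2 ^ i := by
      rw [← pow_succ]
      congr 1
      omega
    omega

def parC {h : ℕ} (v : BT h) : BT h :=
  ⟨⟨(v.1 : ℕ) - 1, by have := v.1.isLt; omega⟩, ⟨(v.2 : ℕ) / 2, div2_lt v.2.isLt⟩⟩

def lftC {h : ℕ} (v : BT h) : BT h :=
  ⟨v.1, ⟨(v.2 : ℕ) - 1, by have := v.2.isLt; omega⟩⟩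

def rgtC {h : ℕ} (v : BT h) : BT h :=
  ⟨v.1, ⟨min ((v.2 : ℕ) + 1) (2 ^ (v.1 : ℕ) - 1), by
    have : 1 ≤ 2 ^ (v.1 : ℕ) := Nat.one_le_two_pow
    omega⟩⟩

def chC {h : ℕ} (v : BT h) (d : ℕ) : BT h :=
  ⟨⟨min ((v.1 : ℕ) + 1) h, by omega⟩,
   ⟨min (2 * (v.2 : ℕ) + d) (2 ^ (min ((v.1 : ℕ) + 1) h) - 1), by
      simp only [Fin.val_mk]
      have : 1 ≤ 2 ^ (min ((v.1 : ℕ) + 1) h) := Nat.one_le_two_pow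
      omega⟩⟩

lemma deg_le (h : ℕ) (v : BT h) : ((gGraph h).neighborSet v).ncard ≤ 5 := by
  have hsub : (gGraph h).neighborSet v ⊆
      ({parC v, lftC v, rgtC v, chC v 0, chC v 1} : Set (BT h)) := by
    intro w hw
    have hadj : (gGraph h).Adj v w := hw
    rw [adj_iff] at hadj
    obtain ⟨hne, hr⟩ := hadj
    simp only [Set.mem_insert_iff, Set.mem_singleton_iff]
    obtain ⟨⟨i, hi⟩, ⟨j, hj⟩⟩ := v
    obtain ⟨⟨iw, hiw⟩, ⟨jw, hjw⟩⟩ := w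
    simp only [ERel, IsParent, Fin.val_mk] at hr
    simp only [Fin.val_mk] at hj hjw
    rcases hr with (⟨e1, e2⟩ | ⟨e1, e2⟩) | (⟨e1, e2⟩ | ⟨e1, e2⟩)
    · -- w is a child of v
      have hle : i + 1 ≤ h := by omega
      have hpw : (2:ℕ) ^ iw = 2 ^ (i + 1) := by rw [e1]
      have hmin : min (i + 1) h = i + 1 := by omega
      have hpm : (2:ℕ) ^ (min (i + 1) h) = 2 ^ (i + 1) := by rw [hmin]
      rcases (by omega : jw = 2 * j ∨ jw = 2 * j + 1) with h' | h'
      · refine Or.inr (Or.inr (Or.inr (Or.inl (bt_ext ?_ ?_))))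
        · show iw = min (i + 1) h
          omega
        · show jw = min (2 * j + 0) (2 ^ (min (i + 1) h) - 1)
          omega
      · refine Or.inr (Or.inr (Or.inr (Or.inr (bt_ext ?_ ?_))))
        · show iw = min (i + 1) h
          omega
        · show jw = min (2 * j + 1) (2 ^ (min (i + 1) h) - 1)
          omega
    · -- w is the right neighbour of v
      refine Or.inr (Or.inr (Or.inl (bt_ext ?_ ?_)))
      · show iw = i
        omega
      · show jw = min (j + 1) (2 ^ i - 1)
        have hpw : (2:ℕ) ^ iw = 2 ^ i := by rw [e1]
        omega
    · -- w is the parent of v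
      refine Or.inl (bt_ext ?_ ?_)
      · show iw = i - 1
        omega
      · show jw = j / 2
        omega
    · -- w is the left neighbour of v
      refine Or.inr (Or.inl (bt_ext ?_ ?_))
      · show iw = i
        omega
      · show jw = j - 1
        omega
  refine (Set.ncard_le_ncard hsub (Set.toFinite _)).trans ?_
  refine (Set.ncard_insert_le _ _).trans ?_
  have h4 : (({lftC v, rgtC v, chC v 0, chC v 1} : Set (BT h)).ncard) ≤ 4 := by
    refine (Set.ncard_insert_le _ _).trans ?_
    have h3 : (({rgtC v, chC v 0, chC v 1} : Set (BT h)).ncard) ≤ 3 := by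
      refine (Set.ncard_insert_le _ _).trans ?_
      have h2 : (({chC v 0, chC v 1} : Set (BT h)).ncard) ≤ 2 := by
        refine (Set.ncard_insert_le _ _).trans ?_
        simp [Set.ncard_singleton]
      omega
    omega
  omega

/-- For every `h ≥ 1`, the graph `G_h` is planar and has maximum degree at most `5`. -/
theorem stmt15 (h : ℕ) (hh : 1 ≤ h) :
    IsPlanar (gGraph h) ∧ ∀ v : BT h, ((gGraph h).neighborSet v).ncard ≤ 5 := by
  exact ⟨⟨gEmbedding h⟩, deg_le h⟩
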